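/- Let K_X = U_XU_X* with U_X an n×r matrix, B = (H_MK_XH_M* + I)⁻¹, and suppose A* satisfies A* = (H_E(H_M*H_M)⁻¹H_M*BH_MU_XV, H_E(H_E*H_E)⁻¹H_M*W)(BH_MU_XV, W)⁻¹ for matrices V (r×r invertible) and W (n_M×(n_M−r)) such that (BH_MU_XV, W) is invertible. Then A*H_MK_X = H_EK_X. -/

import Mathlib

open Matrix
open scoped ComplexOrder

/-- Let K_X = U_XU_X*, B = (H_MK_XH_M* + I)⁻¹, and suppose
A* = (H_E(H_M*H_M)⁻¹H_M*BH_MU_XV, H_E(H_E*H_E)⁻¹H_M*W)(BH_MU_XV, W)⁻¹  for an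
invertible r×r matrix V and an n_M×(n_M−r) matrix W such that (BH_MU_XV, W) is
invertible (with inverse C). Then A*H_MK_X = H_EK_X. -/
theorem stmt_16 {n nM nE r : ℕ} (hr : r ≤ nM)
    (HM : Matrix (Fin nM) (Fin n) ℂ) (HE : Matrix (Fin nE) (Fin n) ℂ)
    (hM : (HMᴴ * HM).PosDef) (hE : (HEᴴ * HE).PosDef)
    (UX : Matrix (Fin n) (Fin r) ℂ)
    (KX : Matrix (Fin n) (Fin n) ℂ) (hKX : KX = UX * UXᴴ)
    (B : Matrix (Fin nM) (Fin nM) ℂ) (hB : B = (HM * KX * HMᴴ + 1)⁻¹)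
    (V : Matrix (Fin r) (Fin r) ℂ) (hV : IsUnit V)
    (W : Matrix (Fin nM) (Fin (nM - r)) ℂ)
    (C : Matrix (Fin r ⊕ Fin (nM - r)) (Fin nM) ℂ)
    (hC₁ : fromCols (B * HM * UX * V) W * C = 1)
    (hC₂ : C * fromCols (B * HM * UX * V) W = 1)
    (Astar : Matrix (Fin nE) (Fin nM) ℂ)
    (hA : Astar = fromCols (HE * (HMᴴ * HM)⁻¹ * HMᴴ * B * HM * UX * V)
        (HE * (HEᴴ * HE)⁻¹ * HMᴴ * W) * C) :
    Astar * HM * KX = HE * KX := by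
  set G : Matrix (Fin nM) (Fin r) ℂ := HM * UX with hG
  have hSpd : (Gᴴ * G + 1).PosDef :=
    Matrix.PosDef.posSemidef_add (Matrix.posSemidef_conjTranspose_mul_self G) Matrix.PosDef.one
  have hSunit : IsUnit ((Gᴴ * G + 1).det) :=
    Matrix.isUnit_iff_isUnit_det _ |>.1 hSpd.isUnit
  have hbig : HM * KX * HMᴴ + 1 = G * Gᴴ + 1 := by
    rw [hKX, hG, conjTranspose_mul]; simp only [Matrix.mul_assoc]
  have hBigpd : (HM * KX * HMᴴ + 1).PosDef := by
    rw [hbig]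
    exact Matrix.PosDef.posSemidef_add (Matrix.posSemidef_self_mul_conjTranspose G)
      Matrix.PosDef.one
  have hBmul : B * (HM * KX * HMᴴ + 1) = 1 := by
    rw [hB]
    exact Matrix.nonsing_inv_mul _ (Matrix.isUnit_iff_isUnit_det _ |>.1 hBigpd.isUnit)
  -- push-through: B * G = G * (GᴴG + 1)⁻¹
  have hpush : B * G = G * (Gᴴ * G + 1)⁻¹ := by
    have h1 : (HM * KX * HMᴴ + 1) * G = G * (Gᴴ * G + 1) := by
      rw [hbig, Matrix.add_mul, Matrix.mul_add, Matrix.one_mul, Matrix.mul_one,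
        Matrix.mul_assoc]
    calc B * G = B * G * ((Gᴴ * G + 1) * (Gᴴ * G + 1)⁻¹) := by
          rw [Matrix.mul_nonsing_inv _ hSunit, Matrix.mul_one]
      _ = B * (G * (Gᴴ * G + 1)) * (Gᴴ * G + 1)⁻¹ := by
          simp only [Matrix.mul_assoc]
      _ = B * ((HM * KX * HMᴴ + 1) * G) * (Gᴴ * G + 1)⁻¹ := by rw [h1]
      _ = (B * (HM * KX * HMᴴ + 1)) * G * (Gᴴ * G + 1)⁻¹ := by
          simp only [Matrix.mul_assoc]
      _ = G * (Gᴴ * G + 1)⁻¹ := by rw [hBmul, Matrix.one_mul]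
  have hAM : Astar * fromCols (B * HM * UX * V) W
      = fromCols (HE * (HMᴴ * HM)⁻¹ * HMᴴ * B * HM * UX * V)
        (HE * (HEᴴ * HE)⁻¹ * HMᴴ * W) := by
    rw [hA, Matrix.mul_assoc, hC₂, Matrix.mul_one]
  rw [Matrix.mul_fromCols] at hAM
  have h1 := (Matrix.fromCols_inj.eq_iff.mp hAM).1
  have hVdet : IsUnit V.det := Matrix.isUnit_iff_isUnit_det _ |>.1 hV
  have h2 : Astar * (B * (HM * UX))
      = HE * ((HMᴴ * HM)⁻¹ * (HMᴴ * (B * (HM * UX)))) := by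
    have := congrArg (fun M => M * V⁻¹) h1
    simp only [Matrix.mul_assoc] at this
    rwa [Matrix.mul_nonsing_inv _ hVdet, Matrix.mul_one] at this
  have hMdet : IsUnit ((HMᴴ * HM).det) := Matrix.isUnit_iff_isUnit_det _ |>.1 hM.isUnit
  have hBHU : B * (HM * UX) = G * (Gᴴ * G + 1)⁻¹ := by rw [← hG, hpush]
  have h3 : Astar * G = HE * UX := by
    rw [hBHU] at h2
    have := congrArg (fun M => M * (Gᴴ * G + 1)) h2
    simp only [Matrix.mul_assoc] at this
    rw [Matrix.nonsing_inv_mul _ hSunit, Matrix.mul_one] at this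
    rw [this, hG, ← Matrix.mul_assoc HMᴴ HM UX, ← Matrix.mul_assoc ((HMᴴ * HM)⁻¹),
      Matrix.nonsing_inv_mul _ hMdet, Matrix.one_mul]
  calc Astar * HM * KX = Astar * G * UXᴴ := by
        rw [hKX, hG, Matrix.mul_assoc, Matrix.mul_assoc, Matrix.mul_assoc]
    _ = HE * UX * UXᴴ := by rw [h3]
    _ = HE * KX := by rw [hKX, Matrix.mul_assoc]
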